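/- In PSL(2, p) for a prime p ≥ 7, generated by a = image of [[0,1],[-1,0]] and b = image of [[0,1],[-1,1]], the elements a and b have orders 2 and 3 respectively, and ab and ab² both have order p. -/

import Mathlib

open Matrix
open scoped MatrixGroups

theorem stmt_17 (p : ℕ) (hp : p.Prime) (hp7 : 7 ≤ p) :
    haveI : Fact p.Prime := ⟨hp⟩
    ∀ (A B : SpecialLinearGroup (Fin 2) (ZMod p)),
      (A : Matrix (Fin 2) (Fin 2) (ZMod p)) = !![0, 1; -1, 0] →
      (B : Matrix (Fin 2) (Fin 2) (ZMod p)) = !![0, 1; -1, 1] →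
      ∀ a b : PSL(2, ZMod p),
        a = QuotientGroup.mk A → b = QuotientGroup.mk B →
        orderOf a = 2 ∧ orderOf b = 3 ∧
        orderOf (a * b) = p ∧ orderOf (a * b ^ 2) = p := by
  haveI : Fact p.Prime := ⟨hp⟩
  intro A B hA hB a b ha hb
  subst ha hb
  haveI : Fact (Nat.Prime 2) := ⟨by norm_num⟩
  haveI : Fact (Nat.Prime 3) := ⟨by norm_num⟩
  have hodd : Odd p := hp.odd_of_ne_two (by omega)
  -- generic: mk x = 1 iff x ∈ center, and non-scalar implies ≠ 1
  have hne : ∀ (X : SpecialLinearGroup (Fin 2) (ZMod p)) (i j : Fin 2), i ≠ j →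
      (X : Matrix (Fin 2) (Fin 2) (ZMod p)) i j = 1 →
      (QuotientGroup.mk X : PSL(2, ZMod p)) ≠ 1 := by
    intro X i j hij hXij h
    rw [QuotientGroup.eq_one_iff, Matrix.SpecialLinearGroup.mem_center_iff] at h
    obtain ⟨r, _, hr⟩ := h
    have := congr_fun (congr_fun hr i) j
    rw [scalar_apply, diagonal_apply_ne _ hij] at this
    rw [← this] at hXij
    exact one_ne_zero hXij.symm
  have hmem : ∀ (X : SpecialLinearGroup (Fin 2) (ZMod p)),
      (X : Matrix (Fin 2) (Fin 2) (ZMod p)) = !![-1, 0; 0, -1] →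
      (QuotientGroup.mk X : PSL(2, ZMod p)) = 1 := by
    intro X hX
    rw [QuotientGroup.eq_one_iff, Matrix.SpecialLinearGroup.mem_center_iff]
    refine ⟨-1, by norm_num, ?_⟩
    rw [hX]
    ext i j
    fin_cases i <;> fin_cases j <;> simp
  have mkpow : ∀ (X : SpecialLinearGroup (Fin 2) (ZMod p)) (n : ℕ),
      (QuotientGroup.mk X : PSL(2, ZMod p)) ^ n = QuotientGroup.mk (X ^ n) := by
    intro X n; rfl
  -- a has order 2
  have hA2 : ((A ^ 2 : SL(2, ZMod p)) : Matrix (Fin 2) (Fin 2) (ZMod p)) = !![-1, 0; 0, -1] := by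
    rw [Matrix.SpecialLinearGroup.coe_pow, hA, pow_two]
    ext i j; fin_cases i <;> fin_cases j <;> simp [Matrix.mul_fin_two]
  have ha2 : orderOf (QuotientGroup.mk A : PSL(2, ZMod p)) = 2 := by
    refine orderOf_eq_prime ?_ ?_
    · rw [mkpow]; exact hmem _ hA2
    · exact hne A 0 1 (by decide) (by rw [hA]; simp)
  -- b has order 3
  have hB3 : ((B ^ 3 : SL(2, ZMod p)) : Matrix (Fin 2) (Fin 2) (ZMod p)) = !![-1, 0; 0, -1] := by
    rw [Matrix.SpecialLinearGroup.coe_pow, hB, pow_succ, pow_two]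
    ext i j; fin_cases i <;> fin_cases j <;> simp [Matrix.mul_fin_two]
  have hb3 : orderOf (QuotientGroup.mk B : PSL(2, ZMod p)) = 3 := by
    refine orderOf_eq_prime ?_ ?_
    · rw [mkpow]; exact hmem _ hB3
    · exact hne B 0 1 (by decide) (by rw [hB]; simp)
  -- powers of the two unipotent-like matrices
  have hU : ∀ n : ℕ, (!![(-1 : ZMod p), 1; 0, -1]) ^ n
      = !![(-1)^n, -((-1)^n * (n : ZMod p)); 0, (-1)^n] := by
    intro n
    induction n with
    | zero => ext i j; fin_cases i <;> fin_cases j <;> simp [Matrix.one_fin_two]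
    | succ n ih =>
      rw [pow_succ, ih]
      ext i j
      fin_cases i <;> fin_cases j <;>
        simp [Matrix.mul_fin_two] <;> ring
  have hL : ∀ n : ℕ, (!![(-1 : ZMod p), 0; 1, -1]) ^ n
      = !![(-1)^n, 0; (-1)^(n+1) * (n : ZMod p), (-1)^n] := by
    intro n
    induction n with
    | zero => ext i j; fin_cases i <;> fin_cases j <;> simp [Matrix.one_fin_two]
    | succ n ih =>
      rw [pow_succ, ih]
      ext i j
      fin_cases i <;> fin_cases j <;>
        simp [Matrix.mul_fin_two] <;> ring
  have hcastp : ((p : ZMod p)) = 0 := ZMod.natCast_self p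
  have hnegp : ((-1 : ZMod p)) ^ p = -1 := hodd.neg_one_pow
  -- ab
  have hABc : ((A * B : SpecialLinearGroup (Fin 2) (ZMod p)) : Matrix (Fin 2) (Fin 2) (ZMod p))
      = !![(-1 : ZMod p), 1; 0, -1] := by
    rw [Matrix.SpecialLinearGroup.coe_mul, hA, hB]
    simp [Matrix.mul_fin_two]
  have hABp : (((A * B) ^ p : SL(2, ZMod p)) : Matrix (Fin 2) (Fin 2) (ZMod p)) = !![-1, 0; 0, -1] := by
    rw [Matrix.SpecialLinearGroup.coe_pow, hABc, hU, hcastp, hnegp]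
    simp
  have hab : orderOf ((QuotientGroup.mk A : PSL(2, ZMod p)) * QuotientGroup.mk B) = p := by
    have : (QuotientGroup.mk A : PSL(2, ZMod p)) * QuotientGroup.mk B
        = QuotientGroup.mk (A * B) := rfl
    rw [this]
    refine orderOf_eq_prime ?_ ?_
    · rw [mkpow]; exact hmem _ hABp
    · exact hne (A * B) 0 1 (by decide) (by rw [hABc]; simp)
  -- ab²
  have hAB2c : ((A * B ^ 2 : SpecialLinearGroup (Fin 2) (ZMod p)) :
      Matrix (Fin 2) (Fin 2) (ZMod p)) = !![(-1 : ZMod p), 0; 1, -1] := by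
    rw [Matrix.SpecialLinearGroup.coe_mul, Matrix.SpecialLinearGroup.coe_pow, hA, hB, pow_two]
    simp [Matrix.mul_fin_two]
  have hAB2p : (((A * B ^ 2) ^ p : SL(2, ZMod p)) : Matrix (Fin 2) (Fin 2) (ZMod p)) = !![-1, 0; 0, -1] := by
    rw [Matrix.SpecialLinearGroup.coe_pow, hAB2c, hL, hcastp, hnegp]
    simp
  have hab2 : orderOf ((QuotientGroup.mk A : PSL(2, ZMod p)) * (QuotientGroup.mk B) ^ 2) = p := by
    have : (QuotientGroup.mk A : PSL(2, ZMod p)) * (QuotientGroup.mk B) ^ 2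
        = QuotientGroup.mk (A * B ^ 2) := rfl
    rw [this]
    refine orderOf_eq_prime ?_ ?_
    · rw [mkpow]; exact hmem _ hAB2p
    · exact hne (A * B ^ 2) 1 0 (by decide) (by rw [hAB2c]; simp)
  exact ⟨ha2, hb3, hab, hab2⟩
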